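/- arXiv:1701.07013 — 2 statements merged into one kernel-verified Lean document; each statement's English description precedes it below -/
import Mathlib

section
/- Let f = x₁³x₃ + x₁³x₂ + x₂²x₃² and g = x₁x₃ + x₂x₃ + x₁x₂. Then f does not belong to the preordering generated by g in ℝ[x₁,x₂,x₃]; that is, there are no sums of squares σ₁, σ₂ ∈ ℝ[x₁,x₂,x₃] with f = σ₁ + σ₂·g. -/
open MvPolynomial
local notation "R3" => MvPolynomial (Fin 3) ℝ

noncomputable def fpoly : R3 := X 0 ^ 3 * X 2 + X 0 ^ 3 * X 1 + X 1 ^ 2 * X 2 ^ 2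
noncomputable def gpoly : R3 := X 0 * X 2 + X 1 * X 2 + X 0 * X 1


lemma list_sq_sum_zero {α : Type*} (l : List α) (f : α → ℝ)
    (h : (l.map fun a => (f a)^2).sum = 0) : ∀ a ∈ l, f a = 0 := by
  induction l with
  | nil => simp
  | cons x xs ih =>
    simp only [List.map_cons, List.sum_cons] at h
    have h1 : 0 ≤ (xs.map fun a => (f a)^2).sum := by
      apply List.sum_nonneg; simp; intro a _; positivity
    have hx : (f x)^2 = 0 := by nlinarith [sq_nonneg (f x)]
    intro a ha
    rcases List.mem_cons.mp ha with rfl | ha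
    · exact pow_eq_zero_iff (n := 2) (by norm_num) |>.mp hx
    · exact ih (by linarith) a ha

noncomputable def S (a b c : ℕ) : Fin 3 →₀ ℕ :=
  Finsupp.single 0 a + Finsupp.single 1 b + Finsupp.single 2 c

lemma S_add (a b c a' b' c' : ℕ) : S a b c + S a' b' c' = S (a+a') (b+b') (c+c') := by
  ext i
  fin_cases i <;> simp [S, Finsupp.single_apply]

lemma fs_eq_iff {a b c a' b' c' : ℕ} : S a b c = S a' b' c' ↔ (a = a' ∧ b = b' ∧ c = c') := by
  constructor
  · intro h
    have h0 := DFunLike.congr_fun h 0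
    have h1 := DFunLike.congr_fun h 1
    have h2 := DFunLike.congr_fun h 2
    simp [S, Finsupp.single_apply] at h0 h1 h2
    exact ⟨h0, h1, h2⟩
  · rintro ⟨rfl, rfl, rfl⟩; rfl

lemma S_ext (m : Fin 3 →₀ ℕ) : m = S (m 0) (m 1) (m 2) := by
  ext i
  fin_cases i <;> simp [S, Finsupp.single_apply]

lemma degree3 (m : Fin 3 →₀ ℕ) : m.degree = m 0 + m 1 + m 2 := by
  change ∑ i ∈ m.support, m i = _
  rw [Finset.sum_subset (Finset.subset_univ m.support)]
  · rw [Fin.sum_univ_three]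
  · intro x _ hx
    exact Finsupp.notMem_support_iff.mp hx

lemma hX : ∀ i : Fin 3, (X i : R3) = monomial (Finsupp.single i 1) 1 := fun i => by
  rw [← X_pow_eq_monomial, pow_one]

lemma gpoly_eq : gpoly = monomial (S 1 0 1) 1 + monomial (S 0 1 1) 1 + monomial (S 1 1 0) 1 := by
  simp only [gpoly, S, hX, monomial_mul]
  norm_num

lemma fpoly_eq : fpoly = monomial (S 3 0 1) 1 + monomial (S 3 1 0) 1 + monomial (S 0 2 2) 1 := by
  simp only [fpoly, S, hX, monomial_pow, monomial_mul, Finsupp.smul_single, smul_eq_mul]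
  norm_num

lemma rep2 (p : R3) (hp : p.IsHomogeneous 2) :
    p = monomial (S 1 1 0) (coeff (S 1 1 0) p) + monomial (S 1 0 1) (coeff (S 1 0 1) p) +
        monomial (S 0 1 1) (coeff (S 0 1 1) p) + monomial (S 2 0 0) (coeff (S 2 0 0) p) +
        monomial (S 0 2 0) (coeff (S 0 2 0) p) + monomial (S 0 0 2) (coeff (S 0 0 2) p) := by
  apply MvPolynomial.ext
  intro m
  simp only [coeff_add, coeff_monomial]
  rw [S_ext m]
  simp only [fs_eq_iff]
  by_cases hdeg : m 0 + m 1 + m 2 = 2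
  · have hcase : (m 0 = 2 ∧ m 1 = 0 ∧ m 2 = 0) ∨ (m 0 = 0 ∧ m 1 = 2 ∧ m 2 = 0) ∨
        (m 0 = 0 ∧ m 1 = 0 ∧ m 2 = 2) ∨ (m 0 = 1 ∧ m 1 = 1 ∧ m 2 = 0) ∨
        (m 0 = 1 ∧ m 1 = 0 ∧ m 2 = 1) ∨ (m 0 = 0 ∧ m 1 = 1 ∧ m 2 = 1) := by omega
    rcases hcase with ⟨h1,h2,h3⟩|⟨h1,h2,h3⟩|⟨h1,h2,h3⟩|⟨h1,h2,h3⟩|⟨h1,h2,h3⟩|⟨h1,h2,h3⟩ <;>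
      rw [h1, h2, h3] <;> norm_num
  · have h0 : coeff (S (m 0) (m 1) (m 2)) p = 0 := by
      apply hp.coeff_eq_zero
      rw [← S_ext m, degree3]
      omega
    rw [h0]
    split_ifs <;> first | (exfalso; omega) | norm_num

lemma rep1 (q : R3) (hq : q.IsHomogeneous 1) :
    q = monomial (S 1 0 0) (coeff (S 1 0 0) q) + monomial (S 0 1 0) (coeff (S 0 1 0) q) +
        monomial (S 0 0 1) (coeff (S 0 0 1) q) := by
  apply MvPolynomial.ext
  intro m
  simp only [coeff_add, coeff_monomial]
  rw [S_ext m]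
  simp only [fs_eq_iff]
  by_cases hdeg : m 0 + m 1 + m 2 = 1
  · have hcase : (m 0 = 1 ∧ m 1 = 0 ∧ m 2 = 0) ∨ (m 0 = 0 ∧ m 1 = 1 ∧ m 2 = 0) ∨
        (m 0 = 0 ∧ m 1 = 0 ∧ m 2 = 1) := by omega
    rcases hcase with ⟨h1,h2,h3⟩|⟨h1,h2,h3⟩|⟨h1,h2,h3⟩ <;>
      rw [h1, h2, h3] <;> norm_num
  · have h0 : coeff (S (m 0) (m 1) (m 2)) q = 0 := by
      apply hq.coeff_eq_zero
      rw [← S_ext m, degree3]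
      omega
    rw [h0]
    split_ifs <;> first | (exfalso; omega) | norm_num

-- coefficient computations for the square of a quadratic form
section CF
variable (b c d e u v : ℝ)

noncomputable def Psq (b c d e u v : ℝ) : R3 :=
  (monomial (S 1 1 0) b + monomial (S 1 0 1) c + monomial (S 0 1 1) d +
   monomial (S 2 0 0) e + monomial (S 0 2 0) u + monomial (S 0 0 2) v)^2

lemma CF400 : coeff (S 4 0 0) (Psq b c d e u v) = e^2 := by
  rw [Psq, pow_two]
  simp only [add_mul, mul_add, monomial_mul, S_add, coeff_add, coeff_monomial, fs_eq_iff]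
  norm_num
  try ring

lemma CF040 : coeff (S 0 4 0) (Psq b c d e u v) = u^2 := by
  rw [Psq, pow_two]
  simp only [add_mul, mul_add, monomial_mul, S_add, coeff_add, coeff_monomial, fs_eq_iff]
  norm_num
  try ring

lemma CF004 : coeff (S 0 0 4) (Psq b c d e u v) = v^2 := by
  rw [Psq, pow_two]
  simp only [add_mul, mul_add, monomial_mul, S_add, coeff_add, coeff_monomial, fs_eq_iff]
  norm_num
  try ring

lemma CF130 : coeff (S 1 3 0) (Psq b c d e u v) = 2*u*b := by
  rw [Psq, pow_two]
  simp only [add_mul, mul_add, monomial_mul, S_add, coeff_add, coeff_monomial, fs_eq_iff]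
  norm_num
  try ring

lemma CF103 : coeff (S 1 0 3) (Psq b c d e u v) = 2*v*c := by
  rw [Psq, pow_two]
  simp only [add_mul, mul_add, monomial_mul, S_add, coeff_add, coeff_monomial, fs_eq_iff]
  norm_num
  try ring

lemma CF220 : coeff (S 2 2 0) (Psq b c d e u v) = b^2 + 2*e*u := by
  rw [Psq, pow_two]
  simp only [add_mul, mul_add, monomial_mul, S_add, coeff_add, coeff_monomial, fs_eq_iff]
  norm_num
  try ring

lemma CF202 : coeff (S 2 0 2) (Psq b c d e u v) = c^2 + 2*e*v := by
  rw [Psq, pow_two]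
  simp only [add_mul, mul_add, monomial_mul, S_add, coeff_add, coeff_monomial, fs_eq_iff]
  norm_num
  try ring

lemma CF310 : coeff (S 3 1 0) (Psq b c d e u v) = 2*e*b := by
  rw [Psq, pow_two]
  simp only [add_mul, mul_add, monomial_mul, S_add, coeff_add, coeff_monomial, fs_eq_iff]
  norm_num
  try ring

lemma CF211 : coeff (S 2 1 1) (Psq b c d e u v) = 2*b*c + 2*d*e := by
  rw [Psq, pow_two]
  simp only [add_mul, mul_add, monomial_mul, S_add, coeff_add, coeff_monomial, fs_eq_iff]
  norm_num
  try ring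

end CF

section CG
variable (al be ga : ℝ)

noncomputable def Qsq (al be ga : ℝ) : R3 :=
  gpoly * (monomial (S 1 0 0) al + monomial (S 0 1 0) be + monomial (S 0 0 1) ga)^2

lemma CG400 : coeff (S 4 0 0) (Qsq al be ga) = 0 := by
  rw [Qsq, gpoly_eq, pow_two]
  simp only [add_mul, mul_add, monomial_mul, S_add, coeff_add, coeff_monomial, fs_eq_iff]
  norm_num
  try ring

lemma CG040 : coeff (S 0 4 0) (Qsq al be ga) = 0 := by
  rw [Qsq, gpoly_eq, pow_two]
  simp only [add_mul, mul_add, monomial_mul, S_add, coeff_add, coeff_monomial, fs_eq_iff]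
  norm_num
  try ring

lemma CG004 : coeff (S 0 0 4) (Qsq al be ga) = 0 := by
  rw [Qsq, gpoly_eq, pow_two]
  simp only [add_mul, mul_add, monomial_mul, S_add, coeff_add, coeff_monomial, fs_eq_iff]
  norm_num
  try ring

lemma CG130 : coeff (S 1 3 0) (Qsq al be ga) = be^2 := by
  rw [Qsq, gpoly_eq, pow_two]
  simp only [add_mul, mul_add, monomial_mul, S_add, coeff_add, coeff_monomial, fs_eq_iff]
  norm_num
  try ring

lemma CG103 : coeff (S 1 0 3) (Qsq al be ga) = ga^2 := by
  rw [Qsq, gpoly_eq, pow_two]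
  simp only [add_mul, mul_add, monomial_mul, S_add, coeff_add, coeff_monomial, fs_eq_iff]
  norm_num
  try ring

lemma CG220 : coeff (S 2 2 0) (Qsq al be ga) = 2*al*be := by
  rw [Qsq, gpoly_eq, pow_two]
  simp only [add_mul, mul_add, monomial_mul, S_add, coeff_add, coeff_monomial, fs_eq_iff]
  norm_num
  try ring

lemma CG202 : coeff (S 2 0 2) (Qsq al be ga) = 2*al*ga := by
  rw [Qsq, gpoly_eq, pow_two]
  simp only [add_mul, mul_add, monomial_mul, S_add, coeff_add, coeff_monomial, fs_eq_iff]
  norm_num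
  try ring

lemma CG310 : coeff (S 3 1 0) (Qsq al be ga) = al^2 := by
  rw [Qsq, gpoly_eq, pow_two]
  simp only [add_mul, mul_add, monomial_mul, S_add, coeff_add, coeff_monomial, fs_eq_iff]
  norm_num
  try ring

lemma CG211 : coeff (S 2 1 1) (Qsq al be ga) = al^2 + 2*al*be + 2*al*ga := by
  rw [Qsq, gpoly_eq, pow_two]
  simp only [add_mul, mul_add, monomial_mul, S_add, coeff_add, coeff_monomial, fs_eq_iff]
  norm_num
  try ring

end CG

-- f's coefficients
lemma cf_f : coeff (S 4 0 0) fpoly = 0 ∧ coeff (S 0 4 0) fpoly = 0 ∧ coeff (S 0 0 4) fpoly = 0 ∧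
    coeff (S 1 3 0) fpoly = 0 ∧ coeff (S 1 0 3) fpoly = 0 ∧ coeff (S 2 2 0) fpoly = 0 ∧
    coeff (S 2 0 2) fpoly = 0 ∧ coeff (S 3 1 0) fpoly = 1 ∧ coeff (S 2 1 1) fpoly = 0 := by
  rw [fpoly_eq]
  simp only [coeff_add, coeff_monomial, fs_eq_iff]
  norm_num

lemma mv_coeff_lsum (l : List R3) (μ : Fin 3 →₀ ℕ) :
    coeff μ l.sum = (l.map fun p => coeff μ p).sum := by
  induction l with
  | nil => simp
  | cons a as ih => simp [coeff_add, ih]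

lemma mult_lsum (l : List R3) (g : R3) (f : R3 → R3) :
    g * (l.map f).sum = (l.map fun a => g * f a).sum := by
  induction l with
  | nil => simp
  | cons a as ih => simp [mul_add, ih]

lemma final (lC lE : List R3)
    (hC : ∀ p ∈ lC, p.IsHomogeneous 2) (hE : ∀ q ∈ lE, q.IsHomogeneous 1)
    (heq : fpoly = (lC.map fun a => a^2).sum + gpoly * (lE.map fun a => a^2).sum) : False := by
  -- coefficient names
  set B : R3 → ℝ := fun p => coeff (S 1 1 0) p with hB
  set Cc : R3 → ℝ := fun p => coeff (S 1 0 1) p with hCc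
  set D : R3 → ℝ := fun p => coeff (S 0 1 1) p with hD
  set E : R3 → ℝ := fun p => coeff (S 2 0 0) p with hEe
  set U : R3 → ℝ := fun p => coeff (S 0 2 0) p with hU
  set V : R3 → ℝ := fun p => coeff (S 0 0 2) p with hV
  set Al : R3 → ℝ := fun q => coeff (S 1 0 0) q with hAl
  set Be : R3 → ℝ := fun q => coeff (S 0 1 0) q with hBe
  set Ga : R3 → ℝ := fun q => coeff (S 0 0 1) q with hGa
  -- per-element square representation
  have hP : ∀ p ∈ lC, p^2 = Psq (B p) (Cc p) (D p) (E p) (U p) (V p) := by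
    intro p hp
    rw [Psq]
    congr 1
    exact rep2 p (hC p hp)
  have hQ : ∀ q ∈ lE, gpoly * q^2 =  Qsq (Al q) (Be q) (Ga q) := by
    intro q hq
    rw [Qsq]
    congr 2
    exact rep1 q (hE q hq)
  -- master extraction
  have master : ∀ μ : Fin 3 →₀ ℕ, coeff μ fpoly =
      (lC.map fun p => coeff μ (Psq (B p) (Cc p) (D p) (E p) (U p) (V p))).sum +
      (lE.map fun q => coeff μ (Qsq (Al q) (Be q) (Ga q))).sum := by
    intro μ
    rw [heq, coeff_add, mv_coeff_lsum, mult_lsum, mv_coeff_lsum]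
    simp only [List.map_map, Function.comp_def]
    congr 1
    · congr 1
      apply List.map_congr_left
      intro p hp
      rw [hP p hp]
    · congr 1
      apply List.map_congr_left
      intro q hq
      rw [hQ q hq]
  obtain ⟨c1, c2, c3, c4, c5, c6, c7, c8, c9⟩ := cf_f
  have lsum_zero : ∀ (l : List R3), (l.map fun _ => (0:ℝ)).sum = 0 := by
    intro l; induction l with
    | nil => simp
    | cons a as ih => simp [ih]
  -- E = 0
  have hE0 : ∀ p ∈ lC, E p = 0 := by
    apply list_sq_sum_zero lC E
    have h := master (S 4 0 0); rw [c1] at h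
    simp only [CF400, CG400] at h
    rw [lsum_zero] at h
    linarith
  have hU0 : ∀ p ∈ lC, U p = 0 := by
    apply list_sq_sum_zero lC U
    have h := master (S 0 4 0); rw [c2] at h
    simp only [CF040, CG040] at h
    rw [lsum_zero] at h
    linarith
  have hV0 : ∀ p ∈ lC, V p = 0 := by
    apply list_sq_sum_zero lC V
    have h := master (S 0 0 4); rw [c3] at h
    simp only [CF004, CG004] at h
    rw [lsum_zero] at h
    linarith
  -- Be = 0
  have hBe0 : ∀ q ∈ lE, Be q = 0 := by
    apply list_sq_sum_zero lE Be
    have h := master (S 1 3 0); rw [c4] at h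
    simp only [CF130, CG130] at h
    have hz : (lC.map fun p => 2*U p*B p).sum = 0 := by
      apply List.sum_eq_zero
      intro y hy
      obtain ⟨p, hp, rfl⟩ := List.mem_map.mp hy
      rw [hU0 p hp]; ring
    rw [hz] at h
    linarith
  have hGa0 : ∀ q ∈ lE, Ga q = 0 := by
    apply list_sq_sum_zero lE Ga
    have h := master (S 1 0 3); rw [c5] at h
    simp only [CF103, CG103] at h
    have hz : (lC.map fun p => 2*V p*Cc p).sum = 0 := by
      apply List.sum_eq_zero
      intro y hy
      obtain ⟨p, hp, rfl⟩ := List.mem_map.mp hy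
      rw [hV0 p hp]; ring
    rw [hz] at h
    linarith
  -- B = 0
  have hB0 : ∀ p ∈ lC, B p = 0 := by
    apply list_sq_sum_zero lC B
    have h := master (S 2 2 0); rw [c6] at h
    simp only [CF220, CG220] at h
    have hz : (lE.map fun q => 2*Al q*Be q).sum = 0 := by
      apply List.sum_eq_zero
      intro y hy
      obtain ⟨q, hq, rfl⟩ := List.mem_map.mp hy
      rw [hBe0 q hq]; ring
    have hc : (lC.map fun p => B p^2 + 2*E p*U p) = lC.map fun p => B p^2 := by
      apply List.map_congr_left
      intro p hp
      rw [hE0 p hp]; ring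
    rw [hz, hc] at h
    linarith
  have hC0 : ∀ p ∈ lC, Cc p = 0 := by
    apply list_sq_sum_zero lC Cc
    have h := master (S 2 0 2); rw [c7] at h
    simp only [CF202, CG202] at h
    have hz : (lE.map fun q => 2*Al q*Ga q).sum = 0 := by
      apply List.sum_eq_zero
      intro y hy
      obtain ⟨q, hq, rfl⟩ := List.mem_map.mp hy
      rw [hGa0 q hq]; ring
    have hc : (lC.map fun p => Cc p^2 + 2*E p*V p) = lC.map fun p => Cc p^2 := by
      apply List.map_congr_left
      intro p hp
      rw [hE0 p hp]; ring
    rw [hz, hc] at h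
    linarith
  -- the contradiction between 310 and 211
  have h310 := master (S 3 1 0); rw [c8] at h310
  simp only [CF310, CG310] at h310
  have hz8 : (lC.map fun p => 2*E p*B p).sum = 0 := by
    apply List.sum_eq_zero
    intro y hy
    obtain ⟨p, hp, rfl⟩ := List.mem_map.mp hy
    rw [hE0 p hp]; ring
  rw [hz8] at h310
  have h211 := master (S 2 1 1); rw [c9] at h211
  simp only [CF211, CG211] at h211
  have hz9 : (lC.map fun p => 2*B p*Cc p + 2*D p*E p).sum = 0 := by
    apply List.sum_eq_zero
    intro y hy
    obtain ⟨p, hp, rfl⟩ := List.mem_map.mp hy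
    rw [hE0 p hp, hB0 p hp]; ring
  have hc9 : (lE.map fun q => Al q^2 + 2*Al q*Be q + 2*Al q*Ga q) = lE.map fun q => Al q^2 := by
    apply List.map_congr_left
    intro q hq
    rw [hBe0 q hq, hGa0 q hq]; ring
  rw [hz9, hc9] at h211
  linarith

lemma vanish_octant : ∀ (n : ℕ) (p : MvPolynomial (Fin n) ℝ),
    (∀ x : Fin n → ℝ, (∀ i, 0 < x i) → eval x p = 0) → p = 0 := by
  intro n
  induction n with
  | zero =>
    intro p h
    have h0 := h (fun i => 1) (by intro i; exact i.elim0)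
    rw [eq_C_of_isEmpty p] at h0 ⊢
    simp at h0
    simp [h0]
  | succ n ih =>
    intro p h
    have key : finSuccEquiv ℝ n p = 0 := by
      apply Polynomial.ext
      intro k
      rw [Polynomial.coeff_zero]
      apply ih
      intro y hy
      have h2 : Polynomial.map (eval y) (finSuccEquiv ℝ n p) = 0 := by
        apply Polynomial.eq_zero_of_infinite_isRoot
        apply Set.Infinite.mono (s := Set.Ioi (0:ℝ))
        · intro t ht
          simp only [Set.mem_setOf_eq, Polynomial.IsRoot]
          rw [← eval_eq_eval_mv_eval']
          apply h
          intro i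
          refine Fin.cases ?_ ?_ i
          · exact ht
          · exact hy
        · exact Set.Ioi_infinite 0
      have := congrArg (fun q => Polynomial.coeff q k) h2
      simpa [Polynomial.coeff_map] using this
    have := congrArg (finSuccEquiv ℝ n).symm key
    simpa using this

lemma isSumSq_list {R : Type*} [CommRing R] {s : R} (h : IsSumSq s) :
    ∃ l : List R, s = (l.map fun a => a^2).sum := by
  induction h with
  | zero => exact ⟨[], by simp⟩
  | sq_add a hS ih =>
    obtain ⟨l, hl⟩ := ih
    exact ⟨a :: l, by simp [hl, sq]⟩

lemma coeff_mul_of_le {R : Type*} [CommSemiring R] {p q : Polynomial R} {m k : ℕ}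
    (hp : p.natDegree ≤ m) (hq : q.natDegree ≤ k) :
    (p * q).coeff (m + k) = p.coeff m * q.coeff k := by
  rw [Polynomial.coeff_mul]
  apply Finset.sum_eq_single (m, k)
  · rintro ⟨a, b⟩ hab hne
    rw [Finset.HasAntidiagonal.mem_antidiagonal] at hab
    simp only at *
    rcases lt_or_ge m a with h | h
    · rw [Polynomial.coeff_eq_zero_of_natDegree_lt (lt_of_le_of_lt hp h), zero_mul]
    · have : k < b ∨ (a = m ∧ b = k) := by omega
      rcases this with h2 | ⟨rfl, rfl⟩
      · rw [Polynomial.coeff_eq_zero_of_natDegree_lt (lt_of_le_of_lt hq h2), mul_zero]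
      · exact absurd rfl hne
  · intro h
    exact absurd (Finset.HasAntidiagonal.mem_antidiagonal.mpr (rfl : m + k = m + k)) h

lemma coeff_two_mul {R : Type*} [CommRing R] (p q : Polynomial R) :
    (p*q).coeff 2 = p.coeff 0 * q.coeff 2 + p.coeff 1 * q.coeff 1 + p.coeff 2 * q.coeff 0 := by
  rw [Polynomial.coeff_mul]
  rw [show (Finset.HasAntidiagonal.antidiagonal 2 : Finset (ℕ×ℕ)) = {(0,2),(1,1),(2,0)} by decide]
  rw [Finset.sum_insert (by decide), Finset.sum_insert (by decide), Finset.sum_singleton]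
  simp only []
  ring

lemma coeff_shift2 {R : Type*} [CommRing R] (g : R) (S : Polynomial R) (k : ℕ) :
    (Polynomial.C g * Polynomial.X^2 * S).coeff (k+2) = g * S.coeff k := by
  rw [show Polynomial.C g * Polynomial.X^2 * S = S * Polynomial.X * Polynomial.X * Polynomial.C g by ring]
  rw [Polynomial.coeff_mul_C, Polynomial.coeff_mul_X, Polynomial.coeff_mul_X]
  ring

lemma coeff_shift2_zero {R : Type*} [CommRing R] (g : R) (S : Polynomial R) :
    (Polynomial.C g * Polynomial.X^2 * S).coeff 0 = 0 := by
  rw [show Polynomial.C g * Polynomial.X^2 * S = S * Polynomial.X * Polynomial.X * Polynomial.C g by ring]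
  rw [Polynomial.coeff_mul_C, Polynomial.mul_coeff_zero]
  simp

lemma coeff_lsum (l : List (Polynomial R3)) (k : ℕ) :
    l.sum.coeff k = (l.map fun P => P.coeff k).sum := by
  have := map_list_sum (Polynomial.lcoeff R3 k) l
  exact this

lemma kill_lists (ls lr : List R3)
    (h : (ls.map fun a => a^2).sum + gpoly * (lr.map fun a => a^2).sum = 0) :
    (∀ a ∈ ls, a = 0) ∧ (∀ a ∈ lr, a = 0) := by
  have hev : ∀ x : Fin 3 → ℝ, (∀ i, 0 < x i) →
      (∀ a ∈ ls, eval x a = 0) ∧ (∀ a ∈ lr, eval x a = 0) := by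
    intro x hx
    have := congrArg (MvPolynomial.eval x) h
    rw [map_add, map_mul, map_list_sum, map_list_sum, map_zero] at this
    simp only [List.map_map, Function.comp_def] at this
    have hg : 0 < eval x gpoly := by
      simp only [gpoly, map_add, map_mul, eval_X]
      have h0 := hx 0; have h1 := hx 1; have h2 := hx 2
      positivity
    have hs : 0 ≤ ((ls.map fun a => (eval x a)^2)).sum := by
      apply List.sum_nonneg; simp; intro a _; positivity
    have hr : 0 ≤ ((lr.map fun a => (eval x a)^2)).sum := by
      apply List.sum_nonneg; simp; intro a _; positivity
    have hls : ((ls.map fun a => (eval x a)^2)).sum = 0 ∧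
        ((lr.map fun a => (eval x a)^2)).sum = 0 := by
      have e1 : ((ls.map fun a => eval x (a^2))).sum = ((ls.map fun a => (eval x a)^2)).sum := by
        congr 1; apply List.map_congr_left; intro a _; rw [map_pow]
      have e2 : ((lr.map fun a => eval x (a^2))).sum = ((lr.map fun a => (eval x a)^2)).sum := by
        congr 1; apply List.map_congr_left; intro a _; rw [map_pow]
      rw [e1, e2] at this
      constructor <;> nlinarith
    constructor
    · exact list_sq_sum_zero _ _ hls.1
    · exact list_sq_sum_zero _ _ hls.2
  constructor
  · intro a ha
    apply vanish_octant
    intro x hx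
    exact (hev x hx).1 a ha
  · intro a ha
    apply vanish_octant
    intro x hx
    exact (hev x hx).2 a ha


noncomputable def psi : R3 →ₐ[ℝ] Polynomial R3 :=
  MvPolynomial.aeval (fun i => Polynomial.C (MvPolynomial.X i) * Polynomial.X)

lemma psi_coeff_hom (p : R3) : ∀ d, ((psi p).coeff d).IsHomogeneous d := by
  induction p using MvPolynomial.induction_on with
  | C a =>
    intro d
    have : psi (MvPolynomial.C a) = Polynomial.C (MvPolynomial.C a) := by
      simp [psi, algebraMap_eq]
    rw [this]
    rcases d with _ | d
    · simpa [Polynomial.coeff_C] using isHomogeneous_C _ _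
    · simp [Polynomial.coeff_C]
      exact isHomogeneous_zero _ _ _
  | add p q hp hq =>
    intro d
    rw [map_add, Polynomial.coeff_add]
    exact (hp d).add (hq d)
  | mul_X p i hp =>
    intro d
    have : psi (p * MvPolynomial.X i)
        = (psi p * Polynomial.C (MvPolynomial.X i)) * Polynomial.X := by
      simp [psi]; ring
    rw [this]
    rcases d with _ | d
    · simp [Polynomial.mul_coeff_zero]
      exact isHomogeneous_zero _ _ _
    · rw [Polynomial.coeff_mul_X, Polynomial.coeff_mul_C]
      exact (hp d).mul (isHomogeneous_X _ _)

lemma psi_f : psi fpoly = Polynomial.C fpoly * Polynomial.X^4 := by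
  simp only [fpoly, map_add, map_mul, map_pow, psi, aeval_X]
  ring

lemma psi_g : psi gpoly = Polynomial.C gpoly * Polynomial.X^2 := by
  simp only [gpoly, map_add, map_mul, psi, aeval_X]
  ring

lemma le_lsum : ∀ (l : List ℕ), ∀ x ∈ l, x ≤ l.sum := by
  intro l
  induction l with
  | nil => simp
  | cons a as ih =>
    intro x hx
    rcases List.mem_cons.mp hx with rfl | hx
    · simp
    · have := ih x hx
      simp
      omega

lemma main_ind : ∀ (B : ℕ) (lP lQ : List (Polynomial R3)),
    (∀ P ∈ lP, P.natDegree ≤ B + 2) → (∀ Q ∈ lQ, Q.natDegree ≤ B + 1) →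
    (∀ P ∈ lP, ∀ d, (P.coeff d).IsHomogeneous d) →
    (∀ Q ∈ lQ, ∀ d, (Q.coeff d).IsHomogeneous d) →
    (Polynomial.C fpoly * Polynomial.X^4 =
      (lP.map fun P => P^2).sum + Polynomial.C gpoly * Polynomial.X^2 * (lQ.map fun Q => Q^2).sum) →
    False := by
  intro B
  induction B with
  | succ B ih =>
    intro lP lQ hdP hdQ hhom hhomQ heq
    have hc := congrArg (fun p => Polynomial.coeff p (2*B+6)) heq
    simp only [Polynomial.coeff_add] at hc
    rw [coeff_lsum] at hc
    rw [show 2*B+6 = (2*B+4)+2 by ring, coeff_shift2, coeff_lsum] at hc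
    rw [List.map_map, List.map_map] at hc
    simp only [Function.comp_def] at hc
    have e1 : (lP.map fun P => (P^2).coeff (2*B+4+2)) = lP.map fun P => (P.coeff (B+3))^2 := by
      apply List.map_congr_left; intro P hP
      rw [pow_two, pow_two, show 2*B+4+2 = (B+3)+(B+3) by ring]
      exact coeff_mul_of_le (hdP P hP) (hdP P hP)
    have e2 : (lQ.map fun Q => (Q^2).coeff (2*B+4)) = lQ.map fun Q => (Q.coeff (B+2))^2 := by
      apply List.map_congr_left; intro Q hQ
      rw [pow_two, pow_two, show 2*B+4 = (B+2)+(B+2) by ring]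
      exact coeff_mul_of_le (hdQ Q hQ) (hdQ Q hQ)
    rw [e1, e2] at hc
    have hcf : (Polynomial.C fpoly * Polynomial.X^4).coeff (2*B+4+2) = 0 := by
      rw [Polynomial.coeff_C_mul, Polynomial.coeff_X_pow]
      simp
    rw [hcf] at hc
    have hk := kill_lists (lP.map fun P => P.coeff (B+3)) (lQ.map fun Q => Q.coeff (B+2))
      (by rw [List.map_map, List.map_map]; simp only [Function.comp_def]; exact hc.symm)
    apply ih (lP := lP) (lQ := lQ) ?_ ?_ hhom hhomQ heq
    · intro P hP
      rw [Polynomial.natDegree_le_iff_coeff_eq_zero]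
      intro N hN
      rcases eq_or_lt_of_le (Nat.succ_le_of_lt hN) with hEq | hlt
      · rw [← hEq]
        exact hk.1 _ (List.mem_map_of_mem hP)
      · exact Polynomial.coeff_eq_zero_of_natDegree_lt (lt_of_le_of_lt (hdP P hP) (by omega))
    · intro Q hQ
      rw [Polynomial.natDegree_le_iff_coeff_eq_zero]
      intro N hN
      rcases eq_or_lt_of_le (Nat.succ_le_of_lt hN) with hEq | hlt
      · rw [← hEq]
        exact hk.2 _ (List.mem_map_of_mem hQ)
      · exact Polynomial.coeff_eq_zero_of_natDegree_lt (lt_of_le_of_lt (hdQ Q hQ) (by omega))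
  | zero =>
    intro lP lQ hdP hdQ hhom hhomQ heq
    have hc0 := congrArg (fun p => Polynomial.coeff p 0) heq
    simp only [Polynomial.coeff_add] at hc0
    rw [coeff_lsum, coeff_shift2_zero, add_zero] at hc0
    rw [List.map_map] at hc0
    simp only [Function.comp_def] at hc0
    have e0 : (lP.map fun P => (P^2).coeff 0) = lP.map fun P => (P.coeff 0)^2 := by
      apply List.map_congr_left; intro P hP
      rw [pow_two, pow_two, Polynomial.mul_coeff_zero]
    rw [e0] at hc0
    have hcf0 : (Polynomial.C fpoly * Polynomial.X^4).coeff 0 = 0 := by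
      rw [Polynomial.coeff_C_mul, Polynomial.coeff_X_pow]; simp
    rw [hcf0] at hc0
    have hk0 := kill_lists (lP.map fun P => P.coeff 0) []
      (by rw [List.map_map]
          simp only [Function.comp_def, List.map_nil, List.sum_nil, mul_zero, add_zero]
          exact hc0.symm)
    have hA : ∀ P ∈ lP, P.coeff 0 = 0 := by
      intro P hP; exact hk0.1 _ (List.mem_map_of_mem hP)
    have hc2 := congrArg (fun p => Polynomial.coeff p 2) heq
    simp only [Polynomial.coeff_add] at hc2
    rw [coeff_lsum, show (2:ℕ) = 0+2 by ring, coeff_shift2, coeff_lsum] at hc2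
    rw [List.map_map, List.map_map] at hc2
    simp only [Function.comp_def] at hc2
    have e2a : (lP.map fun P => (P^2).coeff (0+2)) = lP.map fun P => (P.coeff 1)^2 := by
      apply List.map_congr_left; intro P hP
      rw [pow_two, show (0+2 : ℕ) = 2 by ring, coeff_two_mul, hA P hP, pow_two]
      ring
    have e2b : (lQ.map fun Q => (Q^2).coeff 0) = lQ.map fun Q => (Q.coeff 0)^2 := by
      apply List.map_congr_left; intro Q hQ
      rw [pow_two, pow_two, Polynomial.mul_coeff_zero]
    rw [e2a, e2b] at hc2
    have hcf2 : (Polynomial.C fpoly * Polynomial.X^4).coeff (0+2) = 0 := by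
      rw [Polynomial.coeff_C_mul, Polynomial.coeff_X_pow]; simp
    rw [hcf2] at hc2
    have hk2 := kill_lists (lP.map fun P => P.coeff 1) (lQ.map fun Q => Q.coeff 0)
      (by rw [List.map_map, List.map_map]; simp only [Function.comp_def]; exact hc2.symm)
    have hB : ∀ P ∈ lP, P.coeff 1 = 0 := by
      intro P hP; exact hk2.1 _ (List.mem_map_of_mem hP)
    have hD : ∀ Q ∈ lQ, Q.coeff 0 = 0 := by
      intro Q hQ; exact hk2.2 _ (List.mem_map_of_mem hQ)
    have hc4 := congrArg (fun p => Polynomial.coeff p 4) heq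
    simp only [Polynomial.coeff_add] at hc4
    rw [coeff_lsum, show (4:ℕ) = 2+2 by ring, coeff_shift2, coeff_lsum] at hc4
    rw [List.map_map, List.map_map] at hc4
    simp only [Function.comp_def] at hc4
    have e4a : (lP.map fun P => (P^2).coeff (2+2)) = lP.map fun P => (P.coeff 2)^2 := by
      apply List.map_congr_left; intro P hP
      rw [pow_two, pow_two]
      exact coeff_mul_of_le (hdP P hP) (hdP P hP)
    have e4b : (lQ.map fun Q => (Q^2).coeff 2) = lQ.map fun Q => (Q.coeff 1)^2 := by
      apply List.map_congr_left; intro Q hQ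
      rw [pow_two, coeff_two_mul, hD Q hQ, pow_two]
      ring
    rw [e4a, e4b] at hc4
    have hcf4 : (Polynomial.C fpoly * Polynomial.X^4).coeff (2+2) = fpoly := by
      rw [Polynomial.coeff_C_mul, Polynomial.coeff_X_pow]; norm_num
    rw [hcf4] at hc4
    exact final (lP.map fun P => P.coeff 2) (lQ.map fun Q => Q.coeff 1)
      (by intro p hp; obtain ⟨P, hP, rfl⟩ := List.mem_map.mp hp; exact hhom P hP 2)
      (by intro q hq; obtain ⟨Q, hQ, rfl⟩ := List.mem_map.mp hq; exact hhomQ Q hQ 1)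
      (by rw [List.map_map, List.map_map]; simp only [Function.comp_def]; exact hc4)



theorem stmt_15 :
    ¬ ∃ σ₁ σ₂ : MvPolynomial (Fin 3) ℝ, IsSumSq σ₁ ∧ IsSumSq σ₂ ∧
      (X 0 : MvPolynomial (Fin 3) ℝ) ^ 3 * X 2 + (X 0) ^ 3 * X 1 + (X 1) ^ 2 * (X 2) ^ 2 =
        σ₁ + σ₂ * (X 0 * X 2 + X 1 * X 2 + X 0 * X 1) := by
  rintro ⟨σ₁, σ₂, h1, h2, heq⟩
  obtain ⟨l1, hl1⟩ := isSumSq_list h1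
  obtain ⟨l2, hl2⟩ := isSumSq_list h2
  rw [show (X 0 : MvPolynomial (Fin 3) ℝ) ^ 3 * X 2 + (X 0) ^ 3 * X 1 + (X 1) ^ 2 * (X 2) ^ 2
      = fpoly from rfl,
    show (X 0 : MvPolynomial (Fin 3) ℝ) * X 2 + X 1 * X 2 + X 0 * X 1 = gpoly from rfl,
    hl1, hl2] at heq
  have hpsi := congrArg psi heq
  rw [psi_f] at hpsi
  rw [map_add, map_mul, psi_g] at hpsi
  rw [map_list_sum, map_list_sum] at hpsi
  rw [List.map_map, List.map_map] at hpsi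
  simp only [Function.comp_def, map_pow] at hpsi
  set lP := l1.map (fun a => psi a) with hlP
  set lQ := l2.map (fun a => psi a) with hlQ
  have heq2 : Polynomial.C fpoly * Polynomial.X^4 =
      (lP.map fun P => P^2).sum + Polynomial.C gpoly * Polynomial.X^2 * (lQ.map fun Q => Q^2).sum := by
    rw [hlP, hlQ, List.map_map, List.map_map]
    simp only [Function.comp_def]
    rw [hpsi]
    ring
  set B : ℕ := ((lP.map Polynomial.natDegree).sum + (lQ.map Polynomial.natDegree).sum) with hBdef
  apply main_ind B lP lQ ?_ ?_ ?_ ?_ heq2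
  · intro P hP
    have h1 := le_lsum _ _ (List.mem_map_of_mem (f := Polynomial.natDegree) hP)
    omega
  · intro Q hQ
    have h1 := le_lsum _ _ (List.mem_map_of_mem (f := Polynomial.natDegree) hQ)
    omega
  · intro P hP
    obtain ⟨p, hp, rfl⟩ := List.mem_map.mp hP
    exact psi_coeff_hom p
  · intro Q hQ
    obtain ⟨q, hq, rfl⟩ := List.mem_map.mp hQ
    exact psi_coeff_hom q
end

section
/- Let q be a real quadratic form in n variables whose diagonal part ∑ᵢ aᵢᵢxᵢ² is identically zero (or more generally positive semidefinite), where q = ∑_{i,j} aᵢⱼxᵢxⱼ. Then for every z ∈ ℤⁿ, the quadratic module QM(q) generated by q in ℝ[x₁,…,xₙ] is totally stable with respect to the z-grading. -/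
open MvPolynomial

/-- The degree of a polynomial with respect to the `z`-grading, where the monomial `x^δ`
has degree `⟨z, δ⟩`; the zero polynomial has degree `⊥`. -/
noncomputable def zDeg {n : ℕ} (z : Fin n → ℤ) (f : MvPolynomial (Fin n) ℝ) : WithBot ℤ :=
  f.support.sup fun δ => ((∑ i, z i * (δ i : ℤ) : ℤ) : WithBot ℤ)

namespace StabAux

variable {n : ℕ}

def wdeg (z : Fin n → ℤ) (δ : Fin n →₀ ℕ) : ℤ := ∑ i, z i * (δ i : ℤ)

lemma wdeg_add (z : Fin n → ℤ) (α β : Fin n →₀ ℕ) :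
    wdeg z (α + β) = wdeg z α + wdeg z β := by
  simp only [wdeg, Finsupp.add_apply, ← Finset.sum_add_distrib]
  congr 1; ext i; push_cast; ring

lemma zDeg_def (z : Fin n → ℤ) (f : MvPolynomial (Fin n) ℝ) :
    zDeg z f = f.support.sup fun δ => ((wdeg z δ : ℤ) : WithBot ℤ) := rfl

lemma zDeg_le_iff {z : Fin n → ℤ} {f : MvPolynomial (Fin n) ℝ} {D : WithBot ℤ} :
    zDeg z f ≤ D ↔ ∀ δ ∈ f.support, ((wdeg z δ : ℤ) : WithBot ℤ) ≤ D := by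
  rw [zDeg_def]; exact Finset.sup_le_iff

lemma le_zDeg {z : Fin n → ℤ} {f : MvPolynomial (Fin n) ℝ} {δ : Fin n →₀ ℕ}
    (h : δ ∈ f.support) : ((wdeg z δ : ℤ) : WithBot ℤ) ≤ zDeg z f :=
  Finset.le_sup (f := fun δ => ((wdeg z δ : ℤ) : WithBot ℤ)) h

@[simp] lemma zDeg_zero (z : Fin n → ℤ) : zDeg z (0 : MvPolynomial (Fin n) ℝ) = ⊥ := by
  rw [zDeg_def]; simp

lemma zDeg_ne_bot {z : Fin n → ℤ} {f : MvPolynomial (Fin n) ℝ} (h : f ≠ 0) :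
    zDeg z f ≠ ⊥ := by
  obtain ⟨δ, hδ⟩ := MvPolynomial.ne_zero_iff.1 h
  have := le_zDeg (z := z) (MvPolynomial.mem_support_iff.2 hδ)
  intro hb
  rw [hb, le_bot_iff] at this
  exact (WithBot.coe_ne_bot this)

lemma ne_zero_of_zDeg {z : Fin n → ℤ} {f : MvPolynomial (Fin n) ℝ} {d : ℤ}
    (h : zDeg z f = (d : ℤ)) : f ≠ 0 := by
  intro h0; rw [h0, zDeg_zero] at h; exact WithBot.bot_ne_coe h

lemma zDeg_add_le (z : Fin n → ℤ) (f g : MvPolynomial (Fin n) ℝ) :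
    zDeg z (f + g) ≤ max (zDeg z f) (zDeg z g) := by
  rw [zDeg_le_iff]
  intro δ hδ
  rcases Finset.mem_union.1 (MvPolynomial.support_add hδ) with h | h
  · exact le_max_of_le_left (le_zDeg h)
  · exact le_max_of_le_right (le_zDeg h)

noncomputable def zPart (z : Fin n → ℤ) (d : ℤ) (f : MvPolynomial (Fin n) ℝ) :
    MvPolynomial (Fin n) ℝ :=
  ∑ δ ∈ f.support.filter (fun δ => wdeg z δ = d), monomial δ (coeff δ f)

lemma coeff_zPart (z : Fin n → ℤ) (d : ℤ) (f : MvPolynomial (Fin n) ℝ) (μ : Fin n →₀ ℕ) :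
    coeff μ (zPart z d f) = if wdeg z μ = d then coeff μ f else 0 := by
  rw [zPart, MvPolynomial.coeff_sum]
  simp only [coeff_monomial]
  rw [Finset.sum_ite_eq' _ μ (fun δ => coeff δ f)]
  by_cases h : coeff μ f = 0
  · simp [h]
  · simp [Finset.mem_filter, MvPolynomial.mem_support_iff, h]

lemma zPart_add (z : Fin n → ℤ) (d : ℤ) (f g : MvPolynomial (Fin n) ℝ) :
    zPart z d (f + g) = zPart z d f + zPart z d g := by
  ext μ
  simp only [coeff_zPart, coeff_add]
  split_ifs <;> simp

lemma zPart_eq_zero_of_lt {z : Fin n → ℤ} {f : MvPolynomial (Fin n) ℝ} {d : ℤ}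
    (h : zDeg z f < (d : ℤ)) : zPart z d f = 0 := by
  ext μ
  rw [coeff_zPart]
  split_ifs with hw
  · by_contra hc
    rw [MvPolynomial.coeff_zero] at hc
    have := le_zDeg (z := z) (MvPolynomial.mem_support_iff.2 (fun h' => hc (by rw [h'])))
    rw [hw] at this
    exact absurd (lt_of_le_of_lt this h) (lt_irrefl _)
  · simp

lemma zPart_ne_zero_top {z : Fin n → ℤ} {f : MvPolynomial (Fin n) ℝ} {d : ℤ}
    (h : zDeg z f = (d : ℤ)) : zPart z d f ≠ 0 := by
  have hne : f.support.Nonempty := by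
    rw [Finset.nonempty_iff_ne_empty]
    intro he
    rw [zDeg_def, he] at h
    simp at h
  obtain ⟨δ, hmem, hsup⟩ := Finset.exists_mem_eq_sup f.support hne
    (fun δ => ((wdeg z δ : ℤ) : WithBot ℤ))
  rw [zDeg_def] at h
  rw [h] at hsup
  have hw : wdeg z δ = d := by exact_mod_cast hsup.symm
  intro h0
  have := coeff_zPart z d f δ
  rw [h0, if_pos hw] at this
  exact (MvPolynomial.mem_support_iff.1 hmem) this.symm

lemma zDeg_eq_of_zPart {z : Fin n → ℤ} {f : MvPolynomial (Fin n) ℝ} {d : ℤ}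
    (h1 : zDeg z f ≤ (d : ℤ)) (h2 : zPart z d f ≠ 0) : zDeg z f = (d : ℤ) := by
  obtain ⟨μ, hμ⟩ := MvPolynomial.ne_zero_iff.1 h2
  rw [coeff_zPart] at hμ
  split_ifs at hμ with hw
  · refine le_antisymm h1 ?_
    have := le_zDeg (z := z) (MvPolynomial.mem_support_iff.2 hμ)
    rwa [hw] at this
  · exact absurd rfl hμ

lemma zPart_mul {z : Fin n → ℤ} {f g : MvPolynomial (Fin n) ℝ} {d e : ℤ}
    (hf : zDeg z f ≤ (d : ℤ)) (hg : zDeg z g ≤ (e : ℤ)) :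
    zPart z (d + e) (f * g) = zPart z d f * zPart z e g := by
  ext μ
  rw [coeff_zPart, MvPolynomial.coeff_mul, MvPolynomial.coeff_mul]
  by_cases hμ : wdeg z μ = d + e
  · rw [if_pos hμ]
    apply Finset.sum_congr rfl
    rintro ⟨α, β⟩ hab
    have hsum : α + β = μ := Finset.HasAntidiagonal.mem_antidiagonal.1 hab
    by_cases c1 : coeff α f = 0
    · simp [coeff_zPart, c1]
    by_cases c2 : coeff β g = 0
    · simp [coeff_zPart, c2]
    have h1 : wdeg z α ≤ d := by
      have := le_trans (le_zDeg (z := z) (MvPolynomial.mem_support_iff.2 c1)) hf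
      exact_mod_cast this
    have h2 : wdeg z β ≤ e := by
      have := le_trans (le_zDeg (z := z) (MvPolynomial.mem_support_iff.2 c2)) hg
      exact_mod_cast this
    have hw : wdeg z α + wdeg z β = d + e := by
      rw [← wdeg_add, hsum, hμ]
    have e1 : wdeg z α = d := by omega
    have e2 : wdeg z β = e := by omega
    simp [coeff_zPart, e1, e2]
  · rw [if_neg hμ]
    symm
    apply Finset.sum_eq_zero
    rintro ⟨α, β⟩ hab
    have hsum : α + β = μ := Finset.HasAntidiagonal.mem_antidiagonal.1 hab
    simp only [coeff_zPart]
    split_ifs with w1 w2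
    · exfalso; apply hμ; rw [← hsum, wdeg_add, w1, w2]
    all_goals simp

lemma zDeg_mul_le {z : Fin n → ℤ} {f g : MvPolynomial (Fin n) ℝ} {d e : ℤ}
    (hf : zDeg z f ≤ (d : ℤ)) (hg : zDeg z g ≤ (e : ℤ)) :
    zDeg z (f * g) ≤ ((d + e : ℤ) : WithBot ℤ) := by
  rw [zDeg_le_iff]
  intro μ hμ
  classical
  obtain hsub := MvPolynomial.support_mul f g hμ
  rw [Finset.mem_add] at hsub
  obtain ⟨α, hα, β, hβ, rfl⟩ := hsub
  have h1 : wdeg z α ≤ d := by exact_mod_cast le_trans (le_zDeg hα) hf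
  have h2 : wdeg z β ≤ e := by exact_mod_cast le_trans (le_zDeg hβ) hg
  rw [wdeg_add]
  exact_mod_cast add_le_add h1 h2

lemma eval_nonneg_of_isSumSq {s : MvPolynomial (Fin n) ℝ} (hs : IsSumSq s) (x : Fin n → ℝ) :
    0 ≤ eval x s := by
  induction hs with
  | zero => simp
  | @sq_add a S _ ih => rw [map_add, map_mul]; nlinarith [ih]

lemma exists_eval_pos {s : MvPolynomial (Fin n) ℝ} (hs : IsSumSq s) (h : s ≠ 0) :
    ∃ x, 0 < eval x s := by
  by_contra hc
  push_neg at hc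
  apply h
  apply MvPolynomial.funext
  intro x
  rw [map_zero]
  exact le_antisymm (hc x) (eval_nonneg_of_isSumSq hs x)

lemma sos_add_ne_zero {s t : MvPolynomial (Fin n) ℝ} (hs : IsSumSq s) (ht : IsSumSq t)
    (h : s ≠ 0) : s + t ≠ 0 := by
  obtain ⟨x, hx⟩ := exists_eval_pos hs h
  intro h0
  have : eval x (s + t) = 0 := by rw [h0, map_zero]
  rw [map_add] at this
  have := eval_nonneg_of_isSumSq ht x
  linarith

lemma sos_eq_zero_of_add {s t : MvPolynomial (Fin n) ℝ} (hs : IsSumSq s) (ht : IsSumSq t)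
    (h : s + t = 0) : s = 0 := by
  by_contra h0
  exact sos_add_ne_zero hs ht h0 h

lemma isSumSq_sq (b : MvPolynomial (Fin n) ℝ) : IsSumSq (b * b) := by
  simpa using IsSumSq.sq_add b 0 IsSumSq.zero

lemma zDeg_mul {z : Fin n → ℤ} {f g : MvPolynomial (Fin n) ℝ} {d e : ℤ}
    (hf : zDeg z f = (d : ℤ)) (hg : zDeg z g = (e : ℤ)) :
    zDeg z (f * g) = ((d + e : ℤ) : WithBot ℤ) :=
  zDeg_eq_of_zPart (zDeg_mul_le hf.le hg.le)
    (by rw [zPart_mul hf.le hg.le]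
        exact mul_ne_zero (zPart_ne_zero_top hf) (zPart_ne_zero_top hg))

lemma zPart_sq {z : Fin n → ℤ} {a : MvPolynomial (Fin n) ℝ} (ha : a ≠ 0) {E : ℤ}
    (hE : zDeg z (a * a) = (E : ℤ)) :
    ∃ b : MvPolynomial (Fin n) ℝ, b ≠ 0 ∧ zPart z E (a * a) = b * b := by
  obtain ⟨dd, hdd⟩ := WithBot.ne_bot_iff_exists.1 (zDeg_ne_bot (z := z) ha)
  have hda : zDeg z a = (dd : ℤ) := hdd.symm
  have hmul : zDeg z (a * a) = ((dd + dd : ℤ) : WithBot ℤ) := zDeg_mul hda hda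
  have hEd : E = dd + dd := by
    rw [hE] at hmul; exact_mod_cast hmul
  refine ⟨zPart z dd a, zPart_ne_zero_top hda, ?_⟩
  rw [hEd]
  exact zPart_mul hda.le hda.le

lemma zPart_isSumSq {z : Fin n → ℤ} {s : MvPolynomial (Fin n) ℝ} (hs : IsSumSq s) :
    ∀ D : ℤ, zDeg z s ≤ (D : ℤ) → IsSumSq (zPart z D s) := by
  induction hs with
  | zero =>
    intro D _
    rw [zPart_eq_zero_of_lt (by rw [zDeg_zero]; exact WithBot.bot_lt_coe D)]
    exact IsSumSq.zero
  | @sq_add a S pS ih =>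
    intro D hle
    have hbounds : zDeg z (a * a) ≤ ((D : ℤ) : WithBot ℤ) ∧ zDeg z S ≤ ((D : ℤ) : WithBot ℤ) := by
      by_contra hcon
      have hMgt : ((D : ℤ) : WithBot ℤ) < max (zDeg z (a * a)) (zDeg z S) := by
        rcases not_and_or.1 hcon with h | h
        · exact lt_of_lt_of_le (not_le.1 h) (le_max_left _ _)
        · exact lt_of_lt_of_le (not_le.1 h) (le_max_right _ _)
      have hMne : max (zDeg z (a * a)) (zDeg z S) ≠ ⊥ := by
        intro hb; rw [hb] at hMgt; exact absurd hMgt (by simp)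
      obtain ⟨E, hE⟩ := WithBot.ne_bot_iff_exists.1 hMne
      have hDE : (D : ℤ) < E := by
        rw [← hE] at hMgt; exact_mod_cast hMgt
      have hzero : zPart z E (a * a + S) = 0 :=
        zPart_eq_zero_of_lt (lt_of_le_of_lt hle (by exact_mod_cast hDE))
      rw [zPart_add] at hzero
      have hSle : zDeg z S ≤ ((E : ℤ) : WithBot ℤ) := hE ▸ le_max_right _ _
      have hSOS : IsSumSq (zPart z E S) := ih E hSle
      by_cases hAtop : zDeg z (a * a) = ((E : ℤ) : WithBot ℤ)
      · have ha0 : a ≠ 0 := by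
          intro h0; rw [h0, mul_zero, zDeg_zero] at hAtop
          exact WithBot.bot_ne_coe hAtop
        obtain ⟨b, hb0, hbe⟩ := zPart_sq ha0 hAtop
        refine sos_add_ne_zero (t := zPart z E S) ?_ hSOS ?_ hzero
        · rw [hbe]; exact isSumSq_sq b
        · rw [hbe]; exact mul_ne_zero hb0 hb0
      · have hAle : zDeg z (a * a) ≤ ((E : ℤ) : WithBot ℤ) := hE ▸ le_max_left _ _
        rw [zPart_eq_zero_of_lt (lt_of_le_of_ne hAle hAtop), zero_add] at hzero
        have hStop : zDeg z S = ((E : ℤ) : WithBot ℤ) := by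
          rcases max_choice (zDeg z (a * a)) (zDeg z S) with h | h
          · rw [h] at hE; exact absurd hE.symm hAtop
          · rw [h] at hE; exact hE.symm
        exact zPart_ne_zero_top hStop hzero
    obtain ⟨hA, hB⟩ := hbounds
    rw [zPart_add]
    have hSOS := ih D hB
    by_cases hAtop : zDeg z (a * a) = ((D : ℤ) : WithBot ℤ)
    · have ha0 : a ≠ 0 := by
        intro h0; rw [h0, mul_zero, zDeg_zero] at hAtop
        exact WithBot.bot_ne_coe hAtop
      obtain ⟨b, _, hbe⟩ := zPart_sq ha0 hAtop
      rw [hbe]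
      exact IsSumSq.sq_add b hSOS
    · rw [zPart_eq_zero_of_lt (lt_of_le_of_ne hA hAtop), zero_add]
      exact hSOS

lemma zDeg_le_add_sos {z : Fin n → ℤ} {σ τ : MvPolynomial (Fin n) ℝ}
    (hσ : IsSumSq σ) (hτ : IsSumSq τ) : zDeg z σ ≤ zDeg z (σ + τ) := by
  by_cases h0 : σ = 0
  · rw [h0, zDeg_zero]; exact bot_le
  have hne : max (zDeg z σ) (zDeg z τ) ≠ ⊥ := by
    intro h
    rw [max_eq_bot] at h
    exact zDeg_ne_bot h0 h.1
  obtain ⟨E, hE⟩ := WithBot.ne_bot_iff_exists.1 hne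
  have hσle : zDeg z σ ≤ ((E : ℤ) : WithBot ℤ) := hE ▸ le_max_left _ _
  have hτle : zDeg z τ ≤ ((E : ℤ) : WithBot ℤ) := hE ▸ le_max_right _ _
  have h1 : IsSumSq (zPart z E σ) := zPart_isSumSq hσ E hσle
  have h2 : IsSumSq (zPart z E τ) := zPart_isSumSq hτ E hτle
  have hnz : zPart z E σ + zPart z E τ ≠ 0 := by
    rcases max_choice (zDeg z σ) (zDeg z τ) with h | h
    · rw [h] at hE
      exact sos_add_ne_zero h1 h2 (zPart_ne_zero_top hE.symm)
    · rw [h] at hE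
      rw [add_comm]
      exact sos_add_ne_zero h2 h1 (zPart_ne_zero_top hE.symm)
  have hfin : zDeg z (σ + τ) = ((E : ℤ) : WithBot ℤ) := by
    refine zDeg_eq_of_zPart (le_trans (zDeg_add_le z σ τ) (le_of_eq hE.symm)) ?_
    rw [zPart_add]
    exact hnz
  rw [hfin]
  exact hσle


section
variable {n : ℕ}

lemma cls (δ : Fin n →₀ ℕ) (h : Finsupp.degree δ = 2) :
    (∃ i, δ = Finsupp.single i 2) ∨
      ∃ i j, i ≠ j ∧ δ = Finsupp.single i 1 + Finsupp.single j 1 := by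
  classical
  have hs : ∑ a ∈ δ.support, δ a = 2 := h
  have hcard : δ.support.card ≤ 2 := by
    have : δ.support.card = ∑ a ∈ δ.support, 1 := by simp
    rw [this]
    refine le_trans (Finset.sum_le_sum ?_) hs.le
    intro a ha
    exact Nat.one_le_iff_ne_zero.2 (Finsupp.mem_support_iff.1 ha)
  interval_cases hc : δ.support.card
  · exfalso
    rw [Finset.card_eq_zero] at hc
    rw [hc] at hs
    simp at hs
  · left
    obtain ⟨i, hi⟩ := Finset.card_eq_one.1 hc
    refine ⟨i, ?_⟩
    have hδi : δ i = 2 := by rw [hi] at hs; simpa using hs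
    ext a
    by_cases hai : a = i
    · subst hai; simp [hδi]
    · have : a ∉ δ.support := by rw [hi]; simp [hai]
      rw [Finsupp.notMem_support_iff] at this
      simp [this, Finsupp.single_apply, Ne.symm hai, hai]
  · right
    obtain ⟨i, j, hij, hij2⟩ := Finset.card_eq_two.1 hc
    have hsum : δ i + δ j = 2 := by
      rw [hij2] at hs
      rw [Finset.sum_pair hij] at hs
      exact hs
    have hi1 : δ i ≠ 0 := Finsupp.mem_support_iff.1 (by rw [hij2]; simp)
    have hj1 : δ j ≠ 0 := Finsupp.mem_support_iff.1 (by rw [hij2]; simp)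
    have hi : δ i = 1 := by omega
    have hj : δ j = 1 := by omega
    refine ⟨i, j, hij, ?_⟩
    ext a
    by_cases hai : a = i
    · subst hai
      simp [hi, Finsupp.single_apply, hij, Ne.symm hij]
    by_cases haj : a = j
    · subst haj
      simp [hj, Finsupp.single_apply, hij, Ne.symm hij]
    · have : a ∉ δ.support := by rw [hij2]; simp [hai, haj]
      rw [Finsupp.notMem_support_iff] at this
      simp [this, Finsupp.single_apply, Ne.symm hai, Ne.symm haj]
end

section
variable {n : ℕ}

lemma pair_apply_a {a b : Fin n} (hab : a ≠ b) :
    (Finsupp.single a 1 + Finsupp.single b 1 : Fin n →₀ ℕ) a = 1 := by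
  simp [Finsupp.single_apply, hab, Ne.symm hab]

lemma pair_apply_out {a b c : Fin n} (hca : c ≠ a) (hcb : c ≠ b) :
    (Finsupp.single a 1 + Finsupp.single b 1 : Fin n →₀ ℕ) c = 0 := by
  simp [Finsupp.single_apply, Ne.symm hca, Ne.symm hcb]

lemma pair_ne_single {a b i : Fin n} (hab : a ≠ b) :
    (Finsupp.single a 1 + Finsupp.single b 1 : Fin n →₀ ℕ) ≠ Finsupp.single i 2 := by
  intro h
  have ha := DFunLike.congr_fun h a
  have hb := DFunLike.congr_fun h b
  rw [pair_apply_a hab] at ha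
  rw [add_comm] at hb
  rw [pair_apply_a (Ne.symm hab)] at hb
  by_cases hai : a = i
  · subst hai
    simp [Finsupp.single_apply] at ha
  · rw [Finsupp.single_apply, if_neg (fun h' => hai h'.symm)] at ha
    exact one_ne_zero ha

lemma single_ne_single {l i : Fin n} (h : l ≠ i) :
    Finsupp.single l (2:ℕ) ≠ Finsupp.single i 2 := by
  intro he
  have := DFunLike.congr_fun he l
  simp [Finsupp.single_apply, h, Ne.symm h] at this

lemma pair_support {a b : Fin n} (hab : a ≠ b) :
    (Finsupp.single a (1:ℕ) + Finsupp.single b 1).support = {a, b} := by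
  classical
  rw [Finsupp.support_add_eq]
  · rw [Finsupp.support_single_ne_zero a one_ne_zero,
      Finsupp.support_single_ne_zero b one_ne_zero]
    rfl
  · rw [Finsupp.support_single_ne_zero a one_ne_zero,
      Finsupp.support_single_ne_zero b one_ne_zero]
    simp [hab, Ne.symm hab]

lemma prod_single (v : Fin n → ℝ) (l : Fin n) :
    (∏ k ∈ (Finsupp.single l (2:ℕ)).support, v k ^ (Finsupp.single l (2:ℕ)) k) = v l ^ 2 := by
  rw [Finsupp.support_single_ne_zero l (by norm_num)]
  simp

lemma prod_pair (v : Fin n → ℝ) {a b : Fin n} (hab : a ≠ b) :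
    (∏ k ∈ (Finsupp.single a (1:ℕ) + Finsupp.single b 1).support,
      v k ^ ((Finsupp.single a (1:ℕ) + Finsupp.single b 1 : Fin n →₀ ℕ) k)) = v a * v b := by
  rw [pair_support hab, Finset.prod_pair hab]
  simp [Finsupp.single_apply, hab, Ne.symm hab]

lemma eval_basis {Q : MvPolynomial (Fin n) ℝ}
    (hQ : ∀ δ ∈ Q.support, Finsupp.degree δ = 2) (i : Fin n) :
    eval (fun k => if k = i then (1:ℝ) else 0) Q = coeff (Finsupp.single i 2) Q := by
  classical
  set v : Fin n → ℝ := fun k => if k = i then (1:ℝ) else 0 with hv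
  rw [eval_eq]
  have key : ∀ δ ∈ Q.support,
      coeff δ Q * ∏ k ∈ δ.support, v k ^ δ k
        = if δ = Finsupp.single i 2 then coeff δ Q else 0 := by
    intro δ hδ
    rcases cls δ (hQ δ hδ) with ⟨l, rfl⟩ | ⟨a, b, hab, rfl⟩
    · rw [prod_single]
      by_cases hli : l = i
      · subst hli
        simp [hv]
      · rw [if_neg (single_ne_single hli), hv]
        simp [hli]
    · rw [prod_pair v hab, if_neg (pair_ne_single hab)]
      have : v a * v b = 0 := by
        rcases Classical.em (a = i) with hai | hai
        · have hbi : b ≠ i := fun h => hab (hai.trans h.symm)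
          simp [hv, hbi]
        · simp [hv, hai]
      rw [this, mul_zero]
  rw [Finset.sum_congr rfl key, Finset.sum_ite_eq' _ _ (fun δ => coeff δ Q)]
  by_cases hmem : Finsupp.single i 2 ∈ Q.support
  · rw [if_pos hmem]
  · rw [if_neg hmem, MvPolynomial.notMem_support_iff.1 hmem]

lemma eval_pm {Q : MvPolynomial (Fin n) ℝ}
    (hQ : ∀ δ ∈ Q.support, Finsupp.degree δ = 2) {i j : Fin n} (hij : i ≠ j) (s : ℝ) :
    eval (fun k => if k = i then (1:ℝ) else if k = j then s else 0) Q
      = coeff (Finsupp.single i 2) Q + coeff (Finsupp.single j 2) Q * s ^ 2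
        + coeff (Finsupp.single i 1 + Finsupp.single j 1) Q * s := by
  classical
  set v : Fin n → ℝ := fun k => if k = i then (1:ℝ) else if k = j then s else 0 with hv
  rw [eval_eq]
  have key : ∀ δ ∈ Q.support,
      coeff δ Q * ∏ k ∈ δ.support, v k ^ δ k
        = (if δ = Finsupp.single i 2 then coeff δ Q else 0)
          + (if δ = Finsupp.single j 2 then coeff δ Q * s ^ 2 else 0)
          + (if δ = Finsupp.single i 1 + Finsupp.single j 1 then coeff δ Q * s else 0) := by
    intro δ hδ
    rcases cls δ (hQ δ hδ) with ⟨l, rfl⟩ | ⟨a, b, hab, rfl⟩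
    · rw [prod_single]
      rw [if_neg (pair_ne_single hij).symm]
      by_cases hli : l = i
      · subst hli
        rw [if_pos rfl, if_neg (single_ne_single hij), hv]
        simp
      by_cases hlj : l = j
      · subst hlj
        rw [if_neg (single_ne_single hli), if_pos rfl, hv]
        simp [Ne.symm hij, hli]
      · rw [if_neg (single_ne_single hli), if_neg (single_ne_single hlj), hv]
        simp [hli, hlj]
    · rw [prod_pair v hab, if_neg (pair_ne_single hab), if_neg (pair_ne_single hab)]
      by_cases hcase : (a = i ∧ b = j) ∨ (a = j ∧ b = i)
      · rcases hcase with ⟨rfl, rfl⟩ | ⟨rfl, rfl⟩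
        · rw [if_pos rfl, hv]
          simp [Ne.symm hab]
        · rw [if_pos (by rw [add_comm]), hv]
          have e1 : (if a = b then (1:ℝ) else if a = a then s else 0) = s := by
            rw [if_neg hab, if_pos rfl]
          have e2 : (if b = b then (1:ℝ) else if b = a then s else 0) = 1 := by
            rw [if_pos rfl]
          show coeff _ Q * ((if a = b then (1:ℝ) else if a = a then s else 0) *
            (if b = b then (1:ℝ) else if b = a then s else 0)) = _
          rw [e1, e2]
          ring
      · push_neg at hcase
        have hz : v a * v b = 0 := by
          rcases Classical.em (a = i) with hai | hai
          · have hbj : b ≠ j := fun h => hcase.1 hai h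
            have hbi : b ≠ i := fun h => hab (hai.trans h.symm)
            simp [hv, hbj, hbi]
          rcases Classical.em (a = j) with haj | haj
          · have hbi : b ≠ i := fun h => hcase.2 haj h
            have hbj : b ≠ j := fun h => hab (haj.trans h.symm)
            simp [hv, hbi, hbj]
          · simp [hv, hai, haj]
        rw [hz, mul_zero]
        rw [if_neg ?_]
        · ring
        · intro h
          have ha := DFunLike.congr_fun h a
          have hb := DFunLike.congr_fun h b
          rw [pair_apply_a hab] at ha
          rw [add_comm] at hb
          rw [pair_apply_a (Ne.symm hab)] at hb
          by_cases hai : a = i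
          · have hbj : b = j := by
              by_contra hbj
              have hbi : b ≠ i := fun hh => hab (hai.trans hh.symm)
              rw [pair_apply_out hbi hbj] at hb
              exact one_ne_zero hb
            exact hcase.1 hai hbj
          by_cases haj : a = j
          · have hbi : b = i := by
              by_contra hbi
              have hbj : b ≠ j := fun hh => hab (haj.trans hh.symm)
              rw [pair_apply_out hbi hbj] at hb
              exact one_ne_zero hb
            exact hcase.2 haj hbi
          · rw [pair_apply_out hai haj] at ha
            exact one_ne_zero ha
  rw [Finset.sum_congr rfl key]
  rw [Finset.sum_add_distrib, Finset.sum_add_distrib]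
  rw [Finset.sum_ite_eq' _ _ (fun δ => coeff δ Q),
    Finset.sum_ite_eq' _ _ (fun δ => coeff δ Q * s ^ 2),
    Finset.sum_ite_eq' _ _ (fun δ => coeff δ Q * s)]
  congr 1
  · congr 1
    · by_cases hmem : Finsupp.single i 2 ∈ Q.support
      · rw [if_pos hmem]
      · rw [if_neg hmem, MvPolynomial.notMem_support_iff.1 hmem]
    · by_cases hmem : Finsupp.single j 2 ∈ Q.support
      · rw [if_pos hmem]
      · rw [if_neg hmem, MvPolynomial.notMem_support_iff.1 hmem, zero_mul]
  · by_cases hmem : Finsupp.single i 1 + Finsupp.single j 1 ∈ Q.support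
    · rw [if_pos hmem]
    · rw [if_neg hmem, MvPolynomial.notMem_support_iff.1 hmem, zero_mul]
end


section
variable {n : ℕ}

lemma core {Q S T : MvPolynomial (Fin n) ℝ}
    (hQh : ∀ δ ∈ Q.support, Finsupp.degree δ = 2)
    (hdQ : ∀ i, 0 ≤ coeff (Finsupp.single i 2) Q)
    (hS : IsSumSq S) (hT : IsSumSq T) (hT0 : T ≠ 0)
    (h : S + T * Q = 0) : Q = 0 := by
  have hTpt : ∃ x₀, eval x₀ T ≠ 0 := by
    by_contra hcon
    push_neg at hcon
    apply hT0
    apply MvPolynomial.funext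
    intro x
    rw [map_zero]
    exact hcon x
  obtain ⟨x₀, hx₀⟩ := hTpt
  have step1 : ∀ v : Fin n → ℝ, eval v Q ≤ 0 := by
    intro v
    set g : Fin n → Polynomial ℝ :=
      fun i => Polynomial.C (x₀ i) + Polynomial.C (v i - x₀ i) * Polynomial.X with hg
    have evalg : ∀ (t : ℝ) (p : MvPolynomial (Fin n) ℝ),
        (MvPolynomial.aeval g p).eval t = eval (fun i => x₀ i + (v i - x₀ i) * t) p := by
      intro t p
      have h1 : (MvPolynomial.aeval g p).eval t
          = MvPolynomial.eval₂ ((Polynomial.evalRingHom t).comp (algebraMap ℝ (Polynomial ℝ)))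
              ((Polynomial.evalRingHom t) ∘ g) p := by
        rw [MvPolynomial.aeval_def]
        exact MvPolynomial.eval₂_comp_left (Polynomial.evalRingHom t) (algebraMap ℝ (Polynomial ℝ)) g p
      rw [h1]
      have h2 : (Polynomial.evalRingHom t).comp (algebraMap ℝ (Polynomial ℝ)) = RingHom.id ℝ := by
        ext r
        simp
      have h3 : (Polynomial.evalRingHom t) ∘ g = fun i => x₀ i + (v i - x₀ i) * t := by
        funext i
        simp [hg]
      rw [h2, h3, MvPolynomial.eval₂_id]
    have idt : ∀ t : ℝ, Polynomial.eval t (MvPolynomial.aeval g S)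
        + Polynomial.eval t (MvPolynomial.aeval g T) * Polynomial.eval t (MvPolynomial.aeval g Q)
          = 0 := by
      intro t
      have h0 : (MvPolynomial.aeval g) (S + T * Q) = 0 := by rw [h, map_zero]
      have h1 := congrArg (Polynomial.eval t) h0
      simpa [map_add, map_mul] using h1
    have hP0 : Polynomial.eval 0 (MvPolynomial.aeval g T) ≠ 0 := by
      rw [evalg]
      simpa using hx₀
    have hPne : (MvPolynomial.aeval g T) ≠ 0 := fun h0 => hP0 (by rw [h0]; simp)
    have hPnn : ∀ t, 0 ≤ Polynomial.eval t (MvPolynomial.aeval g T) := fun t => by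
      rw [evalg]; exact eval_nonneg_of_isSumSq hT _
    have hSnn : ∀ t, 0 ≤ Polynomial.eval t (MvPolynomial.aeval g S) := fun t => by
      rw [evalg]; exact eval_nonneg_of_isSumSq hS _
    have hkey : ∀ t, Polynomial.eval t (MvPolynomial.aeval g T)
        * Polynomial.eval t (MvPolynomial.aeval g Q) ≤ 0 := by
      intro t
      have := idt t
      nlinarith [hSnn t]
    have hcl : Polynomial.eval 1 (MvPolynomial.aeval g Q) ≤ 0 := by
      by_contra hpos
      push_neg at hpos
      have hcont : Continuous fun t : ℝ => Polynomial.eval t (MvPolynomial.aeval g Q) :=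
        Polynomial.continuous _
      have hopen : IsOpen {t : ℝ | 0 < Polynomial.eval t (MvPolynomial.aeval g Q)} :=
        isOpen_lt continuous_const hcont
      obtain ⟨ε, hε, hball⟩ := Metric.isOpen_iff.1 hopen 1 hpos
      have hioo : Set.Ioo (1 - ε) (1 + ε) ⊆ {t : ℝ | Polynomial.IsRoot (MvPolynomial.aeval g T) t} := by
        intro t ht
        have htU : 0 < Polynomial.eval t (MvPolynomial.aeval g Q) := by
          apply hball
          rw [Real.ball_eq_Ioo]
          exact ht
        have h1 := hkey t
        have h2 := hPnn t
        have h3 : Polynomial.eval t (MvPolynomial.aeval g T) = 0 := by nlinarith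
        exact h3
      have hinf : Set.Infinite {t : ℝ | Polynomial.IsRoot (MvPolynomial.aeval g T) t} :=
        Set.Infinite.mono hioo (Set.Ioo_infinite (by linarith))
      exact hPne (Polynomial.eq_zero_of_infinite_isRoot _ hinf)
    rw [evalg] at hcl
    rw [show (fun i => x₀ i + (v i - x₀ i) * 1) = v from by funext i; ring] at hcl
    exact hcl
  have hb : ∀ i, coeff (Finsupp.single i 2) Q = 0 := by
    intro i
    have h1 := step1 (fun k => if k = i then (1:ℝ) else 0)
    rw [eval_basis hQh i] at h1
    exact le_antisymm h1 (hdQ i)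
  have hc : ∀ i j, i ≠ j → coeff (Finsupp.single i 1 + Finsupp.single j 1) Q = 0 := by
    intro i j hij
    have h1 := step1 (fun k => if k = i then (1:ℝ) else if k = j then (1:ℝ) else 0)
    have h2 := step1 (fun k => if k = i then (1:ℝ) else if k = j then (-1:ℝ) else 0)
    rw [eval_pm hQh hij 1] at h1
    rw [eval_pm hQh hij (-1)] at h2
    rw [hb i, hb j] at h1 h2
    nlinarith [h1, h2]
  apply MvPolynomial.ext
  intro δ
  rw [MvPolynomial.coeff_zero]
  by_contra h0
  have hδ : δ ∈ Q.support := MvPolynomial.mem_support_iff.2 h0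
  rcases cls δ (hQh δ hδ) with ⟨i, rfl⟩ | ⟨i, j, hij, rfl⟩
  · exact h0 (hb i)
  · exact h0 (hc i j hij)

end


section
variable {n : ℕ}

lemma deg_of_hom {q : MvPolynomial (Fin n) ℝ} (hq : q.IsHomogeneous 2) {δ : Fin n →₀ ℕ}
    (h : coeff δ q ≠ 0) : Finsupp.degree δ = 2 := by
  have := hq h
  rw [Finsupp.degree_eq_weight_one]
  exact_mod_cast this

lemma diag_nonneg {q : MvPolynomial (Fin n) ℝ}
    (hdiag : ∀ x : Fin n → ℝ, 0 ≤ ∑ i, coeff (Finsupp.single i 2) q * x i ^ 2) (i : Fin n) :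
    0 ≤ coeff (Finsupp.single i 2) q := by
  have h := hdiag (fun k => if k = i then 1 else 0)
  have e : ∑ j, coeff (Finsupp.single j 2) q * (if j = i then (1:ℝ) else 0) ^ 2
      = coeff (Finsupp.single i 2) q := by
    rw [Finset.sum_eq_single i]
    · simp
    · intro b _ hb
      simp [hb]
    · intro hmem
      exact absurd (Finset.mem_univ i) hmem
  rw [e] at h
  exact h

end

end StabAux

theorem stmt_18 (n : ℕ) (q : MvPolynomial (Fin n) ℝ) (hq : q.IsHomogeneous 2)
    (hdiag : ∀ x : Fin n → ℝ, 0 ≤ ∑ i, coeff (Finsupp.single i 2) q * x i ^ 2)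
    (z : Fin n → ℤ) :
    ∀ f g : MvPolynomial (Fin n) ℝ,
      (∃ σ₀ σ₁ : MvPolynomial (Fin n) ℝ, IsSumSq σ₀ ∧ IsSumSq σ₁ ∧ f = σ₀ + σ₁ * q) →
      (∃ τ₀ τ₁ : MvPolynomial (Fin n) ℝ, IsSumSq τ₀ ∧ IsSumSq τ₁ ∧ g = τ₀ + τ₁ * q) →
      zDeg z f ≤ zDeg z (f + g) := by
  intro f g hfe hge
  obtain ⟨σ₀, σ₁, hσ₀, hσ₁, hf⟩ := hfe
  obtain ⟨τ₀, τ₁, hτ₀, hτ₁, hg⟩ := hge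
  set s₀ := σ₀ + τ₀ with hs₀def
  set s₁ := σ₁ + τ₁ with hs₁def
  have hs₀ : IsSumSq s₀ := hσ₀.add hτ₀
  have hs₁ : IsSumSq s₁ := hσ₁.add hτ₁
  have hsum : f + g = s₀ + s₁ * q := by rw [hf, hg, hs₀def, hs₁def]; ring
  have hfb : zDeg z f ≤ max (zDeg z σ₀) (zDeg z (σ₁ * q)) := by
    rw [hf]; exact StabAux.zDeg_add_le z σ₀ (σ₁ * q)
  have h0 : zDeg z σ₀ ≤ zDeg z s₀ := StabAux.zDeg_le_add_sos hσ₀ hτ₀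
  have h1 : zDeg z (σ₁ * q) ≤ zDeg z (s₁ * q) := by
    by_cases hσz : σ₁ = 0
    · rw [hσz, zero_mul, StabAux.zDeg_zero]; exact bot_le
    by_cases hqz : q = 0
    · rw [hqz]; simp
    have hle : zDeg z σ₁ ≤ zDeg z s₁ := StabAux.zDeg_le_add_sos hσ₁ hτ₁
    have hsz : s₁ ≠ 0 := by
      intro h0'
      apply StabAux.zDeg_ne_bot (z := z) hσz
      rw [h0', StabAux.zDeg_zero] at hle
      exact le_bot_iff.1 hle
    obtain ⟨dσ, hdσ⟩ := WithBot.ne_bot_iff_exists.1 (StabAux.zDeg_ne_bot (z := z) hσz)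
    obtain ⟨ds, hds⟩ := WithBot.ne_bot_iff_exists.1 (StabAux.zDeg_ne_bot (z := z) hsz)
    obtain ⟨c, hc⟩ := WithBot.ne_bot_iff_exists.1 (StabAux.zDeg_ne_bot (z := z) hqz)
    rw [StabAux.zDeg_mul hdσ.symm hc.symm, StabAux.zDeg_mul hds.symm hc.symm]
    have : dσ ≤ ds := by
      rw [← hdσ, ← hds] at hle
      exact_mod_cast hle
    exact_mod_cast add_le_add_left this c
  have hmain : max (zDeg z s₀) (zDeg z (s₁ * q)) ≤ zDeg z (s₀ + s₁ * q) := by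
    by_cases hA : s₀ = 0
    · rw [hA, zero_add, StabAux.zDeg_zero]
      simp
    by_cases hB : s₁ * q = 0
    · rw [hB, add_zero, StabAux.zDeg_zero]
      simp
    have hs1z : s₁ ≠ 0 := fun h' => hB (by rw [h', zero_mul])
    have hqz : q ≠ 0 := fun h' => hB (by rw [h', mul_zero])
    obtain ⟨d₀, hd₀⟩ := WithBot.ne_bot_iff_exists.1 (StabAux.zDeg_ne_bot (z := z) hA)
    obtain ⟨ds, hds⟩ := WithBot.ne_bot_iff_exists.1 (StabAux.zDeg_ne_bot (z := z) hs1z)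
    obtain ⟨c, hc⟩ := WithBot.ne_bot_iff_exists.1 (StabAux.zDeg_ne_bot (z := z) hqz)
    have hmulq : zDeg z (s₁ * q) = ((ds + c : ℤ) : WithBot ℤ) :=
      StabAux.zDeg_mul hds.symm hc.symm
    have hmaxeq : max (zDeg z s₀) (zDeg z (s₁ * q))
        = ((max d₀ (ds + c) : ℤ) : WithBot ℤ) := by
      rw [← hd₀, hmulq, WithBot.coe_max]
    set D : ℤ := max d₀ (ds + c) with hD
    have hub : zDeg z (s₀ + s₁ * q) ≤ ((D : ℤ) : WithBot ℤ) := by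
      refine le_trans (StabAux.zDeg_add_le z s₀ (s₁ * q)) ?_
      rw [hmaxeq]
    have hnz : StabAux.zPart z D (s₀ + s₁ * q) ≠ 0 := by
      rw [StabAux.zPart_add]
      by_cases hcmp : d₀ = ds + c
      · -- equal top degrees: use the core lemma
        have hDd : D = ds + c := by rw [hD, hcmp, max_self]
        have hDd₀ : D = d₀ := by rw [hD, hcmp, max_self]
        intro h00
        set Q := StabAux.zPart z c q with hQdef
        set T := StabAux.zPart z ds s₁ with hTdef
        set S := StabAux.zPart z D s₀ with hSdef
        have hTQ : StabAux.zPart z D (s₁ * q) = T * Q := by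
          rw [hDd]
          exact StabAux.zPart_mul hds.symm.le hc.symm.le
        have hSsos : IsSumSq S := StabAux.zPart_isSumSq hs₀ D (by rw [hDd₀]; exact hd₀.symm.le)
        have hTsos : IsSumSq T := StabAux.zPart_isSumSq hs₁ ds hds.symm.le
        have hTne : T ≠ 0 := StabAux.zPart_ne_zero_top hds.symm
        have hQh : ∀ δ ∈ Q.support, Finsupp.degree δ = 2 := by
          intro δ hδ
          have hcf : coeff δ Q ≠ 0 := MvPolynomial.mem_support_iff.1 hδ
          rw [hQdef, StabAux.coeff_zPart] at hcf
          by_cases hw : StabAux.wdeg z δ = c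
          · rw [if_pos hw] at hcf
            exact StabAux.deg_of_hom hq hcf
          · rw [if_neg hw] at hcf
            exact absurd rfl hcf
        have hdQ : ∀ i, 0 ≤ coeff (Finsupp.single i 2) Q := by
          intro i
          rw [hQdef, StabAux.coeff_zPart]
          split_ifs with hw
          · exact StabAux.diag_nonneg hdiag i
          · exact le_refl 0
        have hzero : S + T * Q = 0 := by rw [← hTQ]; exact h00
        have : Q = 0 := StabAux.core hQh hdQ hSsos hTsos hTne hzero
        exact StabAux.zPart_ne_zero_top hc.symm this
      · rcases lt_or_gt_of_ne hcmp with hlt | hgt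
        · have hDeq : D = ds + c := by rw [hD, max_eq_right hlt.le]
          have hz0 : StabAux.zPart z D s₀ = 0 := by
            apply StabAux.zPart_eq_zero_of_lt
            rw [← hd₀]
            exact_mod_cast (hDeq ▸ hlt)
          rw [hz0, zero_add]
          apply StabAux.zPart_ne_zero_top
          rw [hmulq, hDeq]
        · have hDeq : D = d₀ := by rw [hD, max_eq_left hgt.le]
          have hz0 : StabAux.zPart z D (s₁ * q) = 0 := by
            apply StabAux.zPart_eq_zero_of_lt
            rw [hmulq]
            exact_mod_cast (hDeq ▸ hgt)
          rw [hz0, add_zero]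
          apply StabAux.zPart_ne_zero_top
          rw [← hd₀, hDeq]
    have hfin : zDeg z (s₀ + s₁ * q) = ((D : ℤ) : WithBot ℤ) :=
      StabAux.zDeg_eq_of_zPart hub hnz
    rw [hfin, hmaxeq]
  calc zDeg z f ≤ max (zDeg z σ₀) (zDeg z (σ₁ * q)) := hfb
    _ ≤ max (zDeg z s₀) (zDeg z (s₁ * q)) := max_le_max h0 h1
    _ ≤ zDeg z (s₀ + s₁ * q) := hmain
    _ = zDeg z (f + g) := by rw [hsum]
end
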